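/- Every graph G on k vertices with more than (1 - 1/(q-1)) k²/2 edges contains a clique K_q (Turán's theorem, the form used for cluster graphs). -/

import Mathlib

open Finset SimpleGraph

/-- Key counting identity for the Turán graph. -/
lemma turan_key (n r : ℕ) (hr : 0 < r) :
    2 * #(turanGraph n r).edgeFinset +
      ∑ j ∈ Finset.range r, (#(Finset.univ.filter fun x : Fin n => x.val % r = j)) ^ 2
      = n ^ 2 := by
  set c : ℕ → ℕ := fun j => #(Finset.univ.filter fun x : Fin n => x.val % r = j) with hc
  have hdeg : ∀ i : Fin n, (turanGraph n r).degree i + c (i.val % r) = n := by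
    intro i
    rw [← card_neighborFinset_eq_degree, neighborFinset_eq_filter]
    have : c (i.val % r) = #(Finset.univ.filter fun j : Fin n => ¬ (turanGraph n r).Adj i j) := by
      simp only [hc]
      congr 1
      apply Finset.filter_congr
      intro x _
      simp [turanGraph, eq_comm]
    rw [this, Finset.card_filter_add_card_filter_not, Finset.card_univ, Fintype.card_fin]
  have h2 : ∑ i : Fin n, c (i.val % r) = ∑ j ∈ Finset.range r, (c j) ^ 2 := by
    rw [← Finset.sum_fiberwise_of_maps_to (g := fun x : Fin n => x.val % r)
      (t := Finset.range r) (fun x _ => Finset.mem_range.2 (Nat.mod_lt _ hr))]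
    refine Finset.sum_congr rfl fun j hj => ?_
    rw [Finset.sum_congr rfl (fun x hx => ?_), Finset.sum_const, hc, sq, smul_eq_mul]
    · rw [Finset.mem_filter] at hx; rw [hx.2]
  calc 2 * #(turanGraph n r).edgeFinset + ∑ j ∈ Finset.range r, (c j) ^ 2
      = ∑ i : Fin n, (turanGraph n r).degree i + ∑ i : Fin n, c (i.val % r) := by
        rw [sum_degrees_eq_twice_card_edges, h2]
    _ = ∑ i : Fin n, ((turanGraph n r).degree i + c (i.val % r)) := by
        rw [Finset.sum_add_distrib]
    _ = n ^ 2 := by simp [hdeg, sq]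

lemma turan_edge_bound (n r : ℕ) (hr : 0 < r) :
    (#(turanGraph n r).edgeFinset : ℝ) ≤ (1 - 1 / (r : ℝ)) * (n : ℝ) ^ 2 / 2 := by
  set c : ℕ → ℕ := fun j => #(Finset.univ.filter fun x : Fin n => x.val % r = j) with hc
  have hsum : ∑ j ∈ Finset.range r, c j = n := by
    have := Finset.card_eq_sum_card_fiberwise (s := (Finset.univ : Finset (Fin n)))
      (t := Finset.range r) (f := fun x => x.val % r)
      (fun x _ => Finset.mem_range.2 (Nat.mod_lt _ hr))
    simpa [hc] using this.symm
  have key := turan_key n r hr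
  have cauchy : (n : ℝ) ^ 2 ≤ (r : ℝ) * ∑ j ∈ Finset.range r, ((c j : ℝ)) ^ 2 := by
    have := sq_sum_le_card_mul_sum_sq (s := Finset.range r) (f := fun j => (c j : ℝ))
    simpa [hsum, ← Nat.cast_sum] using this
  have keyR : 2 * (#(turanGraph n r).edgeFinset : ℝ) +
      ∑ j ∈ Finset.range r, ((c j : ℝ)) ^ 2 = (n : ℝ) ^ 2 := by
    exact_mod_cast congrArg (Nat.cast : ℕ → ℝ) key
  have hr' : (0 : ℝ) < r := by exact_mod_cast hr
  have h0 : (0:ℝ) ≤ 1 / r := by positivity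
  have h2 := mul_le_mul_of_nonneg_left cauchy h0
  rw [← mul_assoc, one_div_mul_cancel (ne_of_gt hr'), one_mul] at h2
  linarith

/-- Turán's theorem in the form used for cluster graphs: every graph on `k`
vertices with more than `(1 - 1/(q-1)) k²/2` edges contains a clique `K_q`. -/
theorem turan_cluster {V : Type*} [Fintype V] (G : SimpleGraph V) (k q : ℕ)
    (hk : Fintype.card V = k) (hq : 2 ≤ q)
    (he : ((1 : ℝ) - 1 / ((q : ℝ) - 1)) * (k : ℝ) ^ 2 / 2 <
      (Nat.card G.edgeSet : ℝ)) :
    ¬ G.CliqueFree q := by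
  classical
  subst hk
  intro hcf
  obtain ⟨r, rfl⟩ : ∃ r, q = r + 1 := ⟨q - 1, by omega⟩
  have hr : 0 < r := by omega
  obtain ⟨H, _, hH⟩ := SimpleGraph.exists_isTuranMaximal (V := V) hr
  obtain ⟨f⟩ := hH.nonempty_iso_turanGraph
  have hGH : #G.edgeFinset ≤ #H.edgeFinset := hH.2 hcf
  have hHT : #H.edgeFinset = #(turanGraph (Fintype.card V) r).edgeFinset :=
    f.card_edgeFinset_eq
  have hNat : (Nat.card G.edgeSet : ℕ) = #G.edgeFinset := by
    rw [Nat.card_eq_fintype_card, ← SimpleGraph.edgeFinset_card]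
  have hbound := turan_edge_bound (Fintype.card V) r hr
  have hcast : ((r : ℝ) + 1) - 1 = (r : ℝ) := by ring
  rw [Nat.cast_add, Nat.cast_one, hcast] at he
  have : (Nat.card G.edgeSet : ℝ) ≤ (1 - 1 / (r : ℝ)) * ((Fintype.card V : ℕ) : ℝ) ^ 2 / 2 := by
    rw [hNat]
    exact le_trans (by exact_mod_cast hGH.trans_eq hHT) hbound
  linarith
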